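/- Let K be a Metropolis–Hastings kernel with a Lyapunov function V satisfying (KV)(x) ≤ (1−α)V(x)+β, and let K̂ be a modified Metropolis–Hastings kernel with the same proposal such that for every x and proposed x', the acceptance probability of K̂ is ≥ that of K when V(x') < V(x) and ≤ that of K when V(x') ≥ V(x). Then (K̂V)(x) ≤ (KV)(x) ≤ (1−α)V(x)+β for all x; i.e., K̂ inherits the Lyapunov inequality. -/

import Mathlib

open MeasureTheory

/-- Inheriting the Lyapunov condition: for Metropolis–Hastings kernels with common
proposal `Q`, acceptance probabilities `a` (exact) and `â` (modified) with
`â ≥ a` on `V`-decreasing moves and `â ≤ a` on `V`-increasing moves, the modified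
kernel satisfies `(K̂V)(x) ≤ (KV)(x) ≤ (1-α)V(x) + β`. -/
theorem stmt_12 {X : Type*} [MeasurableSpace X]
    (Q : X → Measure X) (hQ : ∀ x, IsProbabilityMeasure (Q x))
    (V : X → ℝ) (hVmeas : Measurable V) (hV : ∀ x, 1 ≤ V x)
    (a ahat : X → X → ℝ)
    (hameas : ∀ x, Measurable (a x)) (hahatmeas : ∀ x, Measurable (ahat x))
    (ha01 : ∀ x y, a x y ∈ Set.Icc (0 : ℝ) 1)
    (hahat01 : ∀ x y, ahat x y ∈ Set.Icc (0 : ℝ) 1)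
    (hVint : ∀ x, Integrable V (Q x))
    (hdec : ∀ x y, V y < V x → a x y ≤ ahat x y)
    (hinc : ∀ x y, V x ≤ V y → ahat x y ≤ a x y)
    (α β : ℝ) (hα : 0 < α) (hα1 : α ≤ 1) (hβ : 0 ≤ β)
    (hdrift : ∀ x,
      ∫ y, (a x y * V y + (1 - a x y) * V x) ∂(Q x) ≤ (1 - α) * V x + β) :
    ∀ x,
      (∫ y, (ahat x y * V y + (1 - ahat x y) * V x) ∂(Q x)
          ≤ ∫ y, (a x y * V y + (1 - a x y) * V x) ∂(Q x)) ∧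
      (∫ y, (ahat x y * V y + (1 - ahat x y) * V x) ∂(Q x) ≤ (1 - α) * V x + β) := by
  intro x
  haveI := hQ x
  have hint : ∀ (b : X → X → ℝ), (∀ x, Measurable (b x)) →
      (∀ x y, b x y ∈ Set.Icc (0 : ℝ) 1) →
      Integrable (fun y => b x y * V y + (1 - b x y) * V x) (Q x) := by
    intro b hbmeas hb01
    have h1 : Integrable (fun y => b x y * (V y - V x)) (Q x) := by
      refine Integrable.bdd_mul ((hVint x).sub (integrable_const _))
        (hbmeas x).aestronglyMeasurable (c := 1) (Filter.Eventually.of_forall fun y => ?_)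
      rw [Real.norm_eq_abs, abs_le]
      exact ⟨by linarith [(hb01 x y).1], (hb01 x y).2⟩
    have := h1.add (integrable_const (V x))
    refine this.congr (Filter.Eventually.of_forall fun y => ?_)
    simp only [Pi.add_apply]; ring
  have key := integral_mono (hint ahat hahatmeas hahat01) (hint a hameas ha01)
    (fun y => by
      rcases lt_or_ge (V y) (V x) with h | h
      · nlinarith [hdec x y h]
      · nlinarith [hinc x y h])
  exact ⟨key, key.trans (hdrift x)⟩
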